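/- Let u : V → W be a linear map and let S ⊆ V be an LPL set such that the restriction of u to the closure cl(S) is a proper map (preimages of compact sets are compact). Then the image u(S) ⊆ W is LPL. -/

import Mathlib

open Set

/-- An (open or closed) affine half-space in a real vector space. -/
def IsHalfspace {V : Type*} [AddCommGroup V] [Module ℝ V] (H : Set V) : Prop :=
  ∃ (f : V →ₗ[ℝ] ℝ) (c : ℝ), H = {x | f x < c} ∨ H = {x | f x ≤ c}

/-- A convex polyhedron: the intersection of finitely many open or closed affine
half-spaces (the empty intersection being the whole space). -/
def IsConvexPolyhedron {V : Type*} [AddCommGroup V] [Module ℝ V] (P : Set V) : Prop :=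
  ∃ (n : ℕ) (H : Fin n → Set V), (∀ i, IsHalfspace (H i)) ∧ P = ⋂ i, H i

/-- A PL (piecewise linear) set: a finite union of convex polyhedra. -/
def IsPL {V : Type*} [AddCommGroup V] [Module ℝ V] (S : Set V) : Prop :=
  ∃ (n : ℕ) (P : Fin n → Set V), (∀ i, IsConvexPolyhedron (P i)) ∧ S = ⋃ i, P i

/-- An LPL (locally piecewise linear) set: the union of a locally finite family of
convex polyhedra. -/
def IsLPL {V : Type*} [AddCommGroup V] [Module ℝ V] [TopologicalSpace V] (S : Set V) : Prop :=
  ∃ Ps : Set (Set V), (∀ P ∈ Ps, IsConvexPolyhedron P) ∧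
    LocallyFinite (fun P : Ps => (P : Set V)) ∧ S = ⋃₀ Ps

section Aux
variable {V : Type*} [AddCommGroup V] [Module ℝ V] {U : Type*} [AddCommGroup U] [Module ℝ U]

def hsp (f : V →ₗ[ℝ] ℝ) (c : ℝ) (b : Bool) : Set V := {x | if b then f x < c else f x ≤ c}

lemma hsp_halfspace (f : V →ₗ[ℝ] ℝ) (c : ℝ) (b : Bool) : IsHalfspace (hsp f c b) := by
  cases b
  · exact ⟨f, c, Or.inr rfl⟩
  · exact ⟨f, c, Or.inl rfl⟩

lemma halfspace_univ : IsHalfspace (univ : Set V) := by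
  refine ⟨0, 1, Or.inl ?_⟩; ext x; simp

lemma poly_of_fintype {ι : Type*} [Fintype ι] (H : ι → Set V) (hH : ∀ i, IsHalfspace (H i)) :
    IsConvexPolyhedron (⋂ i, H i) := by
  classical
  let e := (Fintype.equivFin ι).symm
  exact ⟨Fintype.card ι, fun j => H (e j), fun j => hH (e j), (e.surjective.iInter_comp H).symm⟩

lemma rays_inter_nonempty {n : ℕ} (T : Fin n → Set ℝ)
    (hshape : ∀ i, IsUpperSet (T i) ∨ IsLowerSet (T i))
    (hpair : ∀ i j, (T i ∩ T j).Nonempty) : (⋂ i, T i).Nonempty := by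
  classical
  by_cases hn : Nonempty (Fin n)
  · set A : Set (Fin n) := {i | IsUpperSet (T i)} with hA
    have key : ∀ (C : Set (Fin n)), C.Nonempty → (∀ i ∈ C, ∀ j ∈ C, T i ⊆ T j ∨ T j ⊆ T i) →
        ∃ i0 ∈ C, ∀ i ∈ C, T i0 ⊆ T i := by
      intro C hCne hchain
      obtain ⟨i0, hi0C, hmin⟩ := Set.Finite.exists_minimalFor T C (Set.toFinite C) hCne
      refine ⟨i0, hi0C, fun i hi => ?_⟩
      rcases hchain i hi i0 hi0C with h | h
      · exact hmin hi h
      · exact h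
    by_cases hAne : A.Nonempty
    · by_cases hBne : Aᶜ.Nonempty
      · obtain ⟨i0, hi0, hi0min⟩ := key A hAne (fun i hi j hj => hi.total hj)
        obtain ⟨j0, hj0, hj0min⟩ := key Aᶜ hBne (fun i hi j hj =>
          ((hshape i).resolve_left hi).total ((hshape j).resolve_left hj))
        obtain ⟨t, hti, htj⟩ := hpair i0 j0
        refine ⟨t, mem_iInter.2 fun i => ?_⟩
        by_cases hi : i ∈ A
        · exact hi0min i hi hti
        · exact hj0min i hi htj
      · obtain ⟨i0, hi0, hi0min⟩ := key A hAne (fun i hi j hj => hi.total hj)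
        obtain ⟨t, hti, -⟩ := hpair i0 i0
        refine ⟨t, mem_iInter.2 fun i => hi0min i ?_ hti⟩
        by_contra h; exact hBne ⟨i, h⟩
    · obtain ⟨j0, hj0, hj0min⟩ := key Aᶜ
        (by obtain ⟨i⟩ := hn; exact ⟨i, fun h => hAne ⟨i, h⟩⟩)
        (fun i hi j hj => ((hshape i).resolve_left hi).total ((hshape j).resolve_left hj))
      obtain ⟨t, hti, -⟩ := hpair j0 j0
      exact ⟨t, mem_iInter.2 fun i => hj0min i (fun h => hAne ⟨i, h⟩) hti⟩
  · simp only [not_nonempty_iff] at hn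
    exact ⟨0, by simp⟩

lemma mem_hsp_add_smul (f : V →ₗ[ℝ] ℝ) (c : ℝ) (b : Bool) (x v : V) (t : ℝ) :
    x + t • v ∈ hsp f c b ↔ (if b then f x + t * f v < c else f x + t * f v ≤ c) := by
  simp [hsp, map_add, map_smul, smul_eq_mul]


lemma ite_lt (β : Bool) {A B : ℝ} (h : A < B) : if β = true then A < B else A ≤ B := by
  cases β <;> simp [h, le_of_lt h]

lemma ite_le {β : Bool} {A B : ℝ} (hβ : β = false) (h : A ≤ B) :
    if β = true then A < B else A ≤ B := by
  subst hβ; simpa using h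

lemma lt_of_ite {β : Bool} {A B : ℝ} (hβ : β = true)
    (h : if β = true then A < B else A ≤ B) : A < B := by
  subst hβ; simpa using h

lemma le_of_ite {β : Bool} {A B : ℝ} (h : if β = true then A < B else A ≤ B) : A ≤ B := by
  cases β
  · simpa using h
  · exact le_of_lt (by simpa using h)

set_option maxHeartbeats 1600000 in
/-- Fourier–Motzkin elimination: the cylinder of a polyhedron along a vector is a polyhedron. -/
lemma fourier_motzkin {n : ℕ} (f : Fin n → V →ₗ[ℝ] ℝ) (c : Fin n → ℝ) (b : Fin n → Bool)
    (v : V) : IsConvexPolyhedron {x : V | ∃ t : ℝ, x + t • v ∈ ⋂ i, hsp (f i) (c i) (b i)} := by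
  classical
  set a : Fin n → ℝ := fun i => f i v with ha
  set K : (Fin n ⊕ Fin n × Fin n) → Set V := Sum.elim
    (fun i => if a i = 0 then hsp (f i) (c i) (b i) else univ)
    (fun p => if a p.1 < 0 ∧ 0 < a p.2 then
        hsp (a p.2 • f p.1 - a p.1 • f p.2) (a p.2 * c p.1 - a p.1 * c p.2) (b p.1 || b p.2)
      else univ) with hKdef
  have hK : ∀ k, IsHalfspace (K k) := by
    rintro (i | p) <;> simp only [hKdef, Sum.elim_inl, Sum.elim_inr] <;> split <;>
      first | exact hsp_halfspace _ _ _ | exact halfspace_univ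
  have heq : {x : V | ∃ t : ℝ, x + t • v ∈ ⋂ i, hsp (f i) (c i) (b i)} = ⋂ k, K k := by
    ext x
    simp only [mem_setOf_eq, mem_iInter]
    constructor
    · rintro ⟨t, ht⟩
      have ht' : ∀ i, if b i then f i x + t * a i < c i else f i x + t * a i ≤ c i :=
        fun i => (mem_hsp_add_smul _ _ _ _ _ _).1 (ht i)
      rintro (i | ⟨i, j⟩)
      · simp only [hKdef, Sum.elim_inl]
        split
        · rename_i h0
          have := ht' i
          rw [h0] at this
          simpa [hsp] using this
        · trivial
      · simp only [hKdef, Sum.elim_inr]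
        split
        · rename_i hij
          obtain ⟨hi, hj⟩ := hij
          have Hi := ht' i
          have Hj := ht' j
          have e : (a j • f i - a i • f j) x = a j * f i x - a i * f j x := by
            simp [LinearMap.sub_apply, LinearMap.smul_apply, smul_eq_mul]
          simp only [hsp, mem_setOf_eq]
          cases hbi : b i <;> cases hbj : b j <;> simp [hbi, hbj] at Hi Hj ⊢ <;>
            nlinarith [e, mul_pos hj (neg_pos.2 hi)]
        · trivial
    · intro hx
      set T : Fin n → Set ℝ :=
        fun i => {t | if b i then f i x + t * a i < c i else f i x + t * a i ≤ c i} with hT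
      have hshape : ∀ i, IsUpperSet (T i) ∨ IsLowerSet (T i) := by
        intro i
        rcases lt_trichotomy (a i) 0 with h | h | h
        · left
          intro s t hts hs
          simp only [hT, mem_setOf_eq] at hs ⊢
          cases hbi : b i <;> simp [hbi] at hs ⊢ <;> nlinarith
        · left
          intro s t hts hs
          simp only [hT, mem_setOf_eq, h] at hs ⊢
          simpa using hs
        · right
          intro s t hts hs
          simp only [hT, mem_setOf_eq] at hs ⊢
          cases hbi : b i <;> simp [hbi] at hs ⊢ <;> nlinarith
      -- single nonemptiness
      have hne : ∀ i, (T i).Nonempty := by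
        intro i
        rcases eq_or_ne (a i) 0 with h | h
        · have hxi := hx (Sum.inl i)
          simp only [hKdef, Sum.elim_inl, if_pos h] at hxi
          refine ⟨0, ?_⟩
          simp only [hT, mem_setOf_eq, h, mul_zero, add_zero]
          simpa [hsp] using hxi
        · refine ⟨(c i - f i x - 1) / a i, ?_⟩
          have hdiv : (c i - f i x - 1) / a i * a i = c i - f i x - 1 := div_mul_cancel₀ _ h
          simp only [hT, mem_setOf_eq]
          exact ite_lt _ (by linarith)
      -- key mixed pair
      have hmix : ∀ i j, a i < 0 → 0 < a j → (T i ∩ T j).Nonempty := by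
        intro i j hi hj
        have hG := hx (Sum.inr (i, j))
        simp only [hKdef, Sum.elim_inr, if_pos (And.intro hi hj)] at hG
        rw [hsp, mem_setOf_eq] at hG
        have e : (a j • f i - a i • f j) x = a j * f i x - a i * f j x := by
          simp [LinearMap.sub_apply, LinearMap.smul_apply, smul_eq_mul]
        set li : ℝ := (c i - f i x) / a i with hli
        set lj : ℝ := (c j - f j x) / a j with hlj
        have eli : li * a i = c i - f i x := div_mul_cancel₀ _ (ne_of_lt hi)
        have elj : lj * a j = c j - f j x := div_mul_cancel₀ _ (ne_of_gt hj)
        have elij : (li * a i) * a j = (c i - f i x) * a j := by rw [eli]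
        have elji : (lj * a j) * a i = (c j - f j x) * a i := by rw [elj]
        by_cases hb : (b i || b j) = true
        · have hGlt : (a j • f i - a i • f j) x < a j * c i - a i * c j := lt_of_ite hb hG
          have hkey : 0 < a i * (li * a j - lj * a j) := by nlinarith [e, elij, elji, hGlt]
          have hlt : li < lj := by nlinarith [hkey, mul_pos (neg_pos.2 hi) hj]
          refine ⟨(li + lj) / 2, ?_, ?_⟩ <;> simp only [hT, mem_setOf_eq]
          · have hpos : (0:ℝ) < (li + lj) / 2 - li := by linarith
            have hprod := mul_neg_of_pos_of_neg hpos hi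
            exact ite_lt _ (by nlinarith [eli, hprod])
          · have hpos : (0:ℝ) < lj - (li + lj) / 2 := by linarith
            have hprod := mul_pos hpos hj
            exact ite_lt _ (by nlinarith [elj, hprod])
        · have hbb : b i = false ∧ b j = false := by
            revert hb; cases b i <;> cases b j <;> simp
          obtain ⟨hbi, hbj⟩ := hbb
          have hGle : (a j • f i - a i • f j) x ≤ a j * c i - a i * c j := le_of_ite hG
          have hkey : 0 ≤ a i * (li * a j - lj * a j) := by nlinarith [e, elij, elji, hGle]
          have hle : li ≤ lj := by nlinarith [hkey, mul_pos (neg_pos.2 hi) hj]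
          refine ⟨li, ?_, ?_⟩ <;> simp only [hT, mem_setOf_eq]
          · exact ite_le hbi (by linarith [eli])
          · have hprod : (li - lj) * a j ≤ 0 :=
              mul_nonpos_of_nonpos_of_nonneg (by linarith) (le_of_lt hj)
            exact ite_le hbj (by nlinarith [elj, hprod])
      have hpair : ∀ i j, (T i ∩ T j).Nonempty := by
        have hTz : ∀ i, a i = 0 → ∀ t s : ℝ, t ∈ T i → s ∈ T i := by
          intro i h t s ht
          simp only [hT, mem_setOf_eq, h, mul_zero] at ht ⊢
          exact ht
        intro i j
        rcases eq_or_ne (a i) 0 with h0i | h0i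
        · obtain ⟨t, htj⟩ := hne j
          obtain ⟨s, hs⟩ := hne i
          exact ⟨t, hTz i h0i s t hs, htj⟩
        rcases eq_or_ne (a j) 0 with h0j | h0j
        · obtain ⟨t, hti⟩ := hne i
          obtain ⟨s, hs⟩ := hne j
          exact ⟨t, hti, hTz j h0j s t hs⟩
        rcases lt_or_gt_of_ne h0i with hi | hi <;> rcases lt_or_gt_of_ne h0j with hj | hj
        · -- both negative: upward rays, take large t
          set li : ℝ := (c i - f i x) / a i with hli
          set lj : ℝ := (c j - f j x) / a j with hlj
          have eli : li * a i = c i - f i x := div_mul_cancel₀ _ (ne_of_lt hi)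
          have elj : lj * a j = c j - f j x := div_mul_cancel₀ _ (ne_of_lt hj)
          obtain ⟨t, hti, htj⟩ : ∃ t : ℝ, li < t ∧ lj < t :=
            ⟨max li lj + 1, by have := le_max_left li lj; linarith,
              by have := le_max_right li lj; linarith⟩
          refine ⟨t, ?_, ?_⟩ <;> simp only [hT, mem_setOf_eq]
          · have hprod := mul_neg_of_pos_of_neg (sub_pos.2 hti) hi
            exact ite_lt _ (by nlinarith [eli, hprod])
          · have hprod := mul_neg_of_pos_of_neg (sub_pos.2 htj) hj
            exact ite_lt _ (by nlinarith [elj, hprod])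
        · exact hmix i j hi hj
        · obtain ⟨t, h1, h2⟩ := hmix j i hj hi
          exact ⟨t, h2, h1⟩
        · -- both positive: downward rays
          set li : ℝ := (c i - f i x) / a i with hli
          set lj : ℝ := (c j - f j x) / a j with hlj
          have eli : li * a i = c i - f i x := div_mul_cancel₀ _ (ne_of_gt hi)
          have elj : lj * a j = c j - f j x := div_mul_cancel₀ _ (ne_of_gt hj)
          obtain ⟨t, hti, htj⟩ : ∃ t : ℝ, t < li ∧ t < lj :=
            ⟨min li lj - 1, by have := min_le_left li lj; linarith,
              by have := min_le_right li lj; linarith⟩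
          refine ⟨t, ?_, ?_⟩ <;> simp only [hT, mem_setOf_eq]
          · have hprod := mul_neg_of_neg_of_pos (sub_neg.2 hti) hi
            exact ite_lt _ (by nlinarith [eli, hprod])
          · have hprod := mul_neg_of_neg_of_pos (sub_neg.2 htj) hj
            exact ite_lt _ (by nlinarith [elj, hprod])
      obtain ⟨t, htmem⟩ := rays_inter_nonempty T hshape hpair
      refine ⟨t, fun i => ?_⟩
      rw [mem_hsp_add_smul]
      exact mem_iInter.1 htmem i
  rw [heq]
  exact poly_of_fintype K hK

lemma isConvexPolyhedron_iff {P : Set V} : IsConvexPolyhedron P ↔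
    ∃ (n : ℕ) (f : Fin n → V →ₗ[ℝ] ℝ) (c : Fin n → ℝ) (b : Fin n → Bool),
      P = ⋂ i, hsp (f i) (c i) (b i) := by
  constructor
  · rintro ⟨n, H, hH, rfl⟩
    have : ∀ i, ∃ (f : V →ₗ[ℝ] ℝ) (c : ℝ) (b : Bool), H i = hsp f c b := by
      intro i
      obtain ⟨f, c, h | h⟩ := hH i
      · exact ⟨f, c, true, h⟩
      · exact ⟨f, c, false, h⟩
    choose f c b hfcb using this
    exact ⟨n, f, c, b, by simp_rw [hfcb]⟩
  · rintro ⟨n, f, c, b, rfl⟩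
    exact ⟨n, _, fun i => hsp_halfspace _ _ _, rfl⟩


lemma cylinder_poly {P : Set V} (hP : IsConvexPolyhedron P) (v : V) :
    IsConvexPolyhedron {x : V | ∃ t : ℝ, x + t • v ∈ P} := by
  obtain ⟨n, f, c, b, rfl⟩ := isConvexPolyhedron_iff.mp hP
  exact fourier_motzkin f c b v

lemma poly_inter {P Q : Set V} (hP : IsConvexPolyhedron P) (hQ : IsConvexPolyhedron Q) :
    IsConvexPolyhedron (P ∩ Q) := by
  obtain ⟨n, H, hH, rfl⟩ := hP
  obtain ⟨m, G, hG, rfl⟩ := hQ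
  have key : (⋂ i, H i) ∩ (⋂ j, G j) = ⋂ k : Fin n ⊕ Fin m, Sum.elim H G k := by
    ext x
    simp [mem_iInter, Sum.forall, forall_and]
  rw [key]
  exact poly_of_fintype _ (by rintro (i | j) <;> simp [hH, hG])

lemma poly_preimage (g : U →ₗ[ℝ] V) {P : Set V} (hP : IsConvexPolyhedron P) :
    IsConvexPolyhedron (g ⁻¹' P) := by
  obtain ⟨n, f, c, b, rfl⟩ := isConvexPolyhedron_iff.mp hP
  rw [preimage_iInter]
  refine poly_of_fintype _ fun i => ?_
  have : g ⁻¹' hsp (f i) (c i) (b i) = hsp ((f i).comp g) (c i) (b i) := rfl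
  rw [this]
  exact hsp_halfspace _ _ _

lemma fourier_motzkin_multi {m : ℕ} (v : Fin m → V) {P : Set V} (hP : IsConvexPolyhedron P) :
    IsConvexPolyhedron {x : V | ∃ c : Fin m → ℝ, x + ∑ i, c i • v i ∈ P} := by
  induction m generalizing P with
  | zero =>
    have : {x : V | ∃ c : Fin 0 → ℝ, x + ∑ i, c i • v i ∈ P} = P := by
      ext x; simp
    rwa [this]
  | succ m ih =>
    have key : {x : V | ∃ c : Fin (m+1) → ℝ, x + ∑ i, c i • v i ∈ P}
        = {x : V | ∃ t : ℝ, x + t • v (Fin.last m) ∈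
            {y : V | ∃ c : Fin m → ℝ, y + ∑ i, c i • (v (Fin.castSucc i)) ∈ P}} := by
      ext x
      simp only [mem_setOf_eq]
      constructor
      · rintro ⟨c, hc⟩
        refine ⟨c (Fin.last m), fun i => c (Fin.castSucc i), ?_⟩
        have e : x + c (Fin.last m) • v (Fin.last m)
            + ∑ i : Fin m, c (Fin.castSucc i) • v (Fin.castSucc i)
            = x + ∑ i : Fin (m+1), c i • v i := by
          rw [Fin.sum_univ_castSucc]
          abel
        rw [e]
        exact hc
      · rintro ⟨t, c', hc⟩
        refine ⟨(Fin.snoc c' t : Fin (m+1) → ℝ), ?_⟩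
        have e : x + ∑ i : Fin (m+1), (Fin.snoc c' t : Fin (m+1) → ℝ) i • v i
            = x + t • v (Fin.last m) + ∑ i : Fin m, c' i • v (Fin.castSucc i) := by
          rw [Fin.sum_univ_castSucc]
          simp only [Fin.snoc_castSucc, Fin.snoc_last]
          abel
        rw [e]
        exact hc
    rw [key]
    exact cylinder_poly (ih (fun i => v (Fin.castSucc i)) hP) _

lemma subspace_polyhedron {W : Type*} [AddCommGroup W] [Module ℝ W] [FiniteDimensional ℝ W]
    (U : Submodule ℝ W) : IsConvexPolyhedron (U : Set W) := by
  classical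
  obtain ⟨q, hq⟩ := Submodule.exists_isCompl U
  set π := Submodule.linearProjOfIsCompl q U hq.symm with hπ
  have hker : LinearMap.ker π = U := Submodule.linearProjOfIsCompl_ker hq.symm
  let b := Module.finBasis ℝ q
  let K : (Fin (Module.finrank ℝ q)) × Bool → Set W := fun p =>
    if p.2 then hsp ((b.coord p.1).comp π) 0 false else hsp (-((b.coord p.1).comp π)) 0 false
  have hK : ∀ p, IsHalfspace (K p) := by
    rintro ⟨i, (_|_)⟩ <;> simp only [K]
    · rw [if_neg Bool.false_ne_true]
      exact hsp_halfspace _ _ _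
    · rw [if_pos trivial]
      exact hsp_halfspace _ _ _
  have key : (U : Set W) = ⋂ p, K p := by
    ext x
    simp only [mem_iInter, SetLike.mem_coe]
    constructor
    · intro hx p
      have hx0 : π x = 0 := by
        rw [← LinearMap.mem_ker, hker]; exact hx
      rcases p with ⟨i, (_|_)⟩ <;>
        simp [K, hsp, hx0]
    · intro h
      have hc : ∀ i, b.repr (π x) i = 0 := by
        intro i
        have h1 := h (i, true)
        have h2 := h (i, false)
        simp [K, hsp] at h1 h2
        linarith
      have hx0 : π x = 0 := by
        exact b.repr.injective (by ext i; simpa using hc i)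
      rw [← hker]
      exact LinearMap.mem_ker.2 hx0
  rw [key]
  exact poly_of_fintype _ hK

end Aux

lemma image_polyhedron {V W : Type*} [AddCommGroup V] [Module ℝ V] [FiniteDimensional ℝ V]
    [AddCommGroup W] [Module ℝ W] [FiniteDimensional ℝ W] (u : V →ₗ[ℝ] W) {P : Set V}
    (hP : IsConvexPolyhedron P) : IsConvexPolyhedron (u '' P) := by
  classical
  set m := Module.finrank ℝ (LinearMap.ker u) with hm
  let bk := Module.finBasis ℝ (LinearMap.ker u)
  set v : Fin m → V := fun i => (bk i : V) with hv
  set P' := {x : V | ∃ c : Fin m → ℝ, x + ∑ i, c i • v i ∈ P} with hP'def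
  have hP'poly : IsConvexPolyhedron P' := fourier_motzkin_multi v hP
  have hmem : ∀ x : V, x ∈ P' ↔ ∃ w ∈ LinearMap.ker u, x + w ∈ P := by
    intro x
    constructor
    · rintro ⟨c, hc⟩
      refine ⟨∑ i, c i • v i, ?_, hc⟩
      exact Submodule.sum_mem _ fun i _ => Submodule.smul_mem _ _ (bk i).2
    · rintro ⟨w, hw, hxw⟩
      refine ⟨fun i => bk.repr ⟨w, hw⟩ i, ?_⟩
      have hsum : ∑ i, bk.repr ⟨w, hw⟩ i • v i = w := by
        have h2 := congrArg (Subtype.val) (bk.sum_repr ⟨w, hw⟩)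
        simp only [Submodule.coe_sum, Submodule.coe_smul] at h2
        exact h2
      rw [hsum]
      exact hxw
  obtain ⟨q, hq⟩ := Submodule.exists_isCompl (LinearMap.range u)
  set π := Submodule.linearProjOfIsCompl (LinearMap.range u) q hq with hπ
  obtain ⟨g', hg'⟩ := u.rangeRestrict.exists_rightInverse_of_surjective
    (LinearMap.range_eq_top.2 u.surjective_rangeRestrict)
  set g : W →ₗ[ℝ] V := g'.comp π with hg
  have hug : ∀ (y : W) (hy : y ∈ LinearMap.range u), u (g y) = y := by
    intro y hy
    have h1 : π y = ⟨y, hy⟩ := Submodule.linearProjOfIsCompl_apply_left hq ⟨y, hy⟩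
    have h2 : u.rangeRestrict (g' ⟨y, hy⟩) = ⟨y, hy⟩ := by
      have := LinearMap.congr_fun hg' ⟨y, hy⟩
      exact this
    have h3 : u (g' ⟨y, hy⟩) = y := congrArg Subtype.val h2
    simp [hg, h1, h3]
  have himg : u '' P = (LinearMap.range u : Set W) ∩ g ⁻¹' P' := by
    ext y
    constructor
    · rintro ⟨x, hx, rfl⟩
      refine ⟨⟨x, rfl⟩, ?_⟩
      rw [mem_preimage, hmem]
      refine ⟨x - g (u x), ?_, ?_⟩
      · rw [LinearMap.mem_ker, map_sub, hug (u x) ⟨x, rfl⟩, sub_self]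
      · simpa using hx
    · rintro ⟨hyr, hy⟩
      rw [mem_preimage, hmem] at hy
      obtain ⟨w, hw, hgw⟩ := hy
      refine ⟨g y + w, hgw, ?_⟩
      rw [map_add, hug y hyr, LinearMap.mem_ker.1 hw, add_zero]
  rw [himg]
  exact poly_inter (subspace_polyhedron _) (poly_preimage g hP'poly)


theorem LPL_image_of_properOnClosure {V W : Type*} [NormedAddCommGroup V]
    [NormedSpace ℝ V] [FiniteDimensional ℝ V] [NormedAddCommGroup W] [NormedSpace ℝ W]
    [FiniteDimensional ℝ W] (u : V →ₗ[ℝ] W) (S : Set V) (hS : IsLPL S)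
    (hproper : ∀ K : Set W, IsCompact K → IsCompact (closure S ∩ u ⁻¹' K)) :
    IsLPL (u '' S) := by
  obtain ⟨Ps, hpoly, hlf, rfl⟩ := hS
  refine ⟨(fun P => u '' P) '' Ps, ?_, ?_, ?_⟩
  · rintro Q ⟨P, hP, rfl⟩
    exact image_polyhedron u (hpoly P hP)
  · intro y
    refine ⟨Metric.ball y 1, Metric.ball_mem_nhds y one_pos, ?_⟩
    set C : Set V := closure (⋃₀ Ps) ∩ u ⁻¹' (Metric.closedBall y 1) with hC
    have hCcpt : IsCompact C := hproper _ (isCompact_closedBall y 1)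
    have hfin : {P : Ps | ((P : Set V) ∩ C).Nonempty}.Finite :=
      hlf.finite_nonempty_inter_compact hCcpt
    set F : Set (Set V) := {P | P ∈ Ps ∧ (P ∩ C).Nonempty} with hF
    have hFfin : F.Finite := by
      refine (hfin.image Subtype.val).subset ?_
      rintro P ⟨hPs, hne⟩
      exact ⟨⟨P, hPs⟩, hne, rfl⟩
    have hsub : Subtype.val '' {Q : ((fun P => u '' P) '' Ps : Set (Set W)) |
        ((Q : Set W) ∩ Metric.ball y 1).Nonempty} ⊆ (fun P => u '' P) '' F := by
      rintro Qv ⟨⟨Qv', hQv'⟩, hQne, rfl⟩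
      obtain ⟨P, hPs, rfl⟩ := hQv'
      obtain ⟨z, ⟨x, hxP, rfl⟩, hzball⟩ := hQne
      refine ⟨P, ⟨hPs, ⟨x, hxP, ?_, ?_⟩⟩, rfl⟩
      · exact subset_closure (⟨P, hPs, hxP⟩ : x ∈ ⋃₀ Ps)
      · exact Metric.ball_subset_closedBall hzball
    have : (Subtype.val '' {Q : ((fun P => u '' P) '' Ps : Set (Set W)) |
        ((Q : Set W) ∩ Metric.ball y 1).Nonempty}).Finite :=
      (hFfin.image _).subset hsub
    exact Set.Finite.of_finite_image this (Subtype.val_injective.injOn)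
  · exact image_sUnion
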